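/- Let 𝔤 be the 4-dimensional real Lie algebra with basis X₁, X₂, Y₁, Y₂ whose only nonvanishing brackets among basis elements are [X₁, X₂] = Y₂ and [X₁, Y₂] = Y₁. Let Ω be the alternating bilinear form with Ω(X₁,Y₁) = Ω(X₂,Y₂) = 1 and Ω vanishing on all other pairs of distinct basis elements, and let j be the linear map with jX_i = Y_i and jY_i = −X_i (i = 1, 2). Then Ω is a nondegenerate 2-cocycle, j is a positive compatible complex structure, the span of the image of N^j equals span{X₁ − Y₂, X₂ + Y₁}, this span is not involutive, its Ω-orthogonal complement equals span{X₂ − Y₁, X₁ + Y₂}, and that complement is not involutive. -/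

import Mathlib

/-- The algebraic Nijenhuis tensor of a linear map `j` on a Lie algebra. -/
def algNijenhuis {𝔤 : Type*} [LieRing 𝔤] [LieAlgebra ℝ 𝔤] (j : 𝔤 →ₗ[ℝ] 𝔤) (X Y : 𝔤) : 𝔤 :=
  ⁅j X, j Y⁆ - j ⁅j X, Y⁆ - j ⁅X, j Y⁆ - ⁅X, Y⁆

/-- A subspace `W` of a Lie algebra is involutive if `⁅W, W⁆ ⊆ W`. -/
def IsInvolutive {𝔤 : Type*} [LieRing 𝔤] [LieAlgebra ℝ 𝔤] (W : Set 𝔤) : Prop :=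
  ∀ u ∈ W, ∀ v ∈ W, ⁅u, v⁆ ∈ W

set_option maxHeartbeats 2000000 in
/-- Example 1.  Basis `b 0 = X₁`, `b 1 = X₂`, `b 2 = Y₁`, `b 3 = Y₂`;
only nonvanishing brackets `⁅X₁, X₂⁆ = Y₂` and `⁅X₁, Y₂⁆ = Y₁`; standard `Ω` and `j`.
Then `Ω` is a nondegenerate 2-cocycle, `j` is a positive compatible complex structure,
`Im N^j = span {X₁ - Y₂, X₂ + Y₁}` is not involutive, and its `Ω`-orthogonal complement
`span {X₂ - Y₁, X₁ + Y₂}` is not involutive. -/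
theorem stmt_8 (𝔤 : Type*) [LieRing 𝔤] [LieAlgebra ℝ 𝔤]
    (b : Module.Basis (Fin 4) ℝ 𝔤)
    (hbr : ∀ i k : Fin 4, ⁅b i, b k⁆ =
      if i = 0 ∧ k = 1 then b 3 else if i = 1 ∧ k = 0 then -(b 3) else
      if i = 0 ∧ k = 3 then b 2 else if i = 3 ∧ k = 0 then -(b 2) else 0)
    (Ω : 𝔤 →ₗ[ℝ] 𝔤 →ₗ[ℝ] ℝ)
    (hΩ : ∀ i k : Fin 4, Ω (b i) (b k) =
      !![0,0,1,0; 0,0,0,1; -1,0,0,0; 0,-1,0,0] i k)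
    (j : 𝔤 →ₗ[ℝ] 𝔤)
    (hj0 : j (b 0) = b 2) (hj1 : j (b 1) = b 3)
    (hj2 : j (b 2) = -(b 0)) (hj3 : j (b 3) = -(b 1)) :
    (∀ X : 𝔤, (∀ Y : 𝔤, Ω X Y = 0) → X = 0) ∧
    (∀ X Y Z : 𝔤, Ω ⁅X, Y⁆ Z + Ω ⁅Y, Z⁆ X + Ω ⁅Z, X⁆ Y = 0) ∧
    (∀ X : 𝔤, j (j X) = -X) ∧
    (∀ X Y : 𝔤, Ω (j X) (j Y) = Ω X Y) ∧
    (∀ X : 𝔤, X ≠ 0 → 0 < Ω X (j X)) ∧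
    Submodule.span ℝ {v : 𝔤 | ∃ X Y : 𝔤, v = algNijenhuis j X Y} =
      Submodule.span ℝ {b 0 - b 3, b 1 + b 2} ∧
    ¬ IsInvolutive (↑(Submodule.span ℝ ({b 0 - b 3, b 1 + b 2} : Set 𝔤)) : Set 𝔤) ∧
    {x : 𝔤 | ∀ w ∈ Submodule.span ℝ ({b 0 - b 3, b 1 + b 2} : Set 𝔤), Ω w x = 0} =
      (↑(Submodule.span ℝ ({b 1 - b 2, b 0 + b 3} : Set 𝔤)) : Set 𝔤) ∧
    ¬ IsInvolutive (↑(Submodule.span ℝ ({b 1 - b 2, b 0 + b 3} : Set 𝔤)) : Set 𝔤) := by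
  classical
  have hx : ∀ x : 𝔤, ∃ c : Fin 4 → ℝ, x = c 0 • b 0 + c 1 • b 1 + c 2 • b 2 + c 3 • b 3 := by
    intro x
    refine ⟨fun i => b.repr x i, ?_⟩
    have := b.sum_repr x
    rw [Fin.sum_univ_four] at this
    exact this.symm
  refine ⟨?_, ?_, ?_, ?_, ?_, ?_, ?_, ?_, ?_⟩
  · -- nondegenerate
    intro X hY
    obtain ⟨c, rfl⟩ := hx X
    have e0 := hY (b 2)
    have e1 := hY (b 3)
    have e2 := hY (b 0)
    have e3 := hY (b 1)
    simp [map_add, map_smul, LinearMap.add_apply, LinearMap.smul_apply, smul_eq_mul, hΩ,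
      Matrix.vecHead, Matrix.vecTail] at e0 e1 e2 e3
    simp [e0, e1, e2, e3]
  · -- 2-cocycle
    intro X Y Z
    obtain ⟨c, rfl⟩ := hx X
    obtain ⟨d, rfl⟩ := hx Y
    obtain ⟨e, rfl⟩ := hx Z
    simp [add_lie, lie_add, smul_lie, lie_smul, hbr, map_add, map_smul, LinearMap.add_apply,
      LinearMap.smul_apply, smul_eq_mul, hΩ, Matrix.vecHead, Matrix.vecTail]
    try ring
  · -- j ∘ j = -1
    intro X
    obtain ⟨c, rfl⟩ := hx X
    simp [map_add, map_smul, hj0, hj1, hj2, hj3]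
    try module
  · -- compatibility
    intro X Y
    obtain ⟨c, rfl⟩ := hx X
    obtain ⟨d, rfl⟩ := hx Y
    simp [map_add, map_smul, map_neg, hj0, hj1, hj2, hj3, LinearMap.add_apply,
      LinearMap.smul_apply, LinearMap.neg_apply, smul_eq_mul, hΩ, Matrix.vecHead, Matrix.vecTail]
    try ring
  · -- positivity
    intro X hX0
    obtain ⟨c, rfl⟩ := hx X
    have hval : Ω (c 0 • b 0 + c 1 • b 1 + c 2 • b 2 + c 3 • b 3)
        (j (c 0 • b 0 + c 1 • b 1 + c 2 • b 2 + c 3 • b 3))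
        = c 0 ^ 2 + c 1 ^ 2 + c 2 ^ 2 + c 3 ^ 2 := by
      simp [map_add, map_smul, map_neg, hj0, hj1, hj2, hj3, LinearMap.add_apply,
        LinearMap.smul_apply, LinearMap.neg_apply, smul_eq_mul, hΩ, Matrix.vecHead,
        Matrix.vecTail]
      try ring
    rw [hval]
    have hc : ¬ (c 0 = 0 ∧ c 1 = 0 ∧ c 2 = 0 ∧ c 3 = 0) := by
      rintro ⟨h0, h1, h2, h3⟩
      exact hX0 (by simp [h0, h1, h2, h3])
    have hne : c 0 ^ 2 + c 1 ^ 2 + c 2 ^ 2 + c 3 ^ 2 ≠ 0 := by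
      intro h
      refine hc ⟨?_, ?_, ?_, ?_⟩ <;>
        nlinarith [sq_nonneg (c 0), sq_nonneg (c 1), sq_nonneg (c 2), sq_nonneg (c 3)]
    have hle : (0:ℝ) ≤ c 0 ^ 2 + c 1 ^ 2 + c 2 ^ 2 + c 3 ^ 2 := by positivity
    exact lt_of_le_of_ne hle (Ne.symm hne)
  · -- span of Nijenhuis image
    have hNf : ∀ c d : Fin 4 → ℝ,
        algNijenhuis j (c 0 • b 0 + c 1 • b 1 + c 2 • b 2 + c 3 • b 3)
          (d 0 • b 0 + d 1 • b 1 + d 2 • b 2 + d 3 • b 3)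
        = (c 0 * d 1 - c 1 * d 0 - c 2 * d 3 + c 3 * d 2) • (b 0 - b 3)
          + (- (c 0 * d 3) + c 3 * d 0 + c 1 * d 2 - c 2 * d 1) • (b 1 + b 2) := by
      intro c d
      simp [algNijenhuis, map_add, map_smul, map_neg, map_sub, add_lie, lie_add, smul_lie,
        lie_smul, hbr, hj0, hj1, hj2, hj3]
      try module
    apply le_antisymm
    · rw [Submodule.span_le]
      rintro v ⟨X, Y, rfl⟩
      obtain ⟨c, rfl⟩ := hx X
      obtain ⟨d, rfl⟩ := hx Y
      rw [hNf]
      exact add_mem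
        (Submodule.smul_mem _ _ (Submodule.subset_span (by simp)))
        (Submodule.smul_mem _ _ (Submodule.subset_span (by simp)))
    · rw [Submodule.span_le]
      rintro v hv
      rcases hv with h | h
      · subst h
        apply Submodule.subset_span
        refine ⟨b 0, b 1, ?_⟩
        simp [algNijenhuis, hbr, hj0, hj1, hj2, hj3]
      · rw [Set.mem_singleton_iff] at h
        subst h
        apply Submodule.subset_span
        refine ⟨b 1, b 2, ?_⟩
        simp [algNijenhuis, hbr, hj0, hj1, hj2, hj3]
        try module
  · -- W not involutive
    intro h
    have hbrk : ⁅b 0 - b 3, b 1 + b 2⁆ = b 3 := by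
      simp [sub_lie, lie_add, hbr]
    have h3 := h (b 0 - b 3) (Submodule.subset_span (by simp)) (b 1 + b 2)
      (Submodule.subset_span (by simp))
    rw [hbrk] at h3
    rw [SetLike.mem_coe, Submodule.mem_span_pair] at h3
    obtain ⟨m, n, hmn⟩ := h3
    have h0 := congrArg (fun v => b.repr v 0) hmn
    have h3' := congrArg (fun v => b.repr v 3) hmn
    simp [map_add, map_sub, map_smul, Module.Basis.repr_self, Finsupp.smul_apply, Finsupp.add_apply,
      Finsupp.sub_apply, Finsupp.single_apply, smul_eq_mul] at h0 h3'
    rw [h0] at h3'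
    norm_num at h3'
  · -- orthogonal complement
    ext x
    constructor
    · intro hmem
      obtain ⟨c, rfl⟩ := hx x
      have h1 := hmem (b 0 - b 3) (Submodule.subset_span (by simp))
      have h2 := hmem (b 1 + b 2) (Submodule.subset_span (by simp))
      simp [map_add, map_sub, map_smul, LinearMap.add_apply, LinearMap.sub_apply,
        LinearMap.smul_apply, smul_eq_mul, hΩ, Matrix.vecHead, Matrix.vecTail] at h1 h2
      rw [SetLike.mem_coe, Submodule.mem_span_pair]
      refine ⟨c 1, c 0, ?_⟩
      rw [show c 2 = -(c 1) from by linarith, show c 3 = c 0 from by linarith]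
      try module
    · intro hmem w hw
      rw [SetLike.mem_coe, Submodule.mem_span_pair] at hmem
      obtain ⟨p, q, rfl⟩ := hmem
      rw [Submodule.mem_span_pair] at hw
      obtain ⟨m, n, rfl⟩ := hw
      simp [map_add, map_sub, map_smul, LinearMap.add_apply, LinearMap.sub_apply,
        LinearMap.smul_apply, smul_eq_mul, hΩ, Matrix.vecHead, Matrix.vecTail]
      try ring
  · -- W⊥ not involutive
    intro h
    have hbrk : ⁅b 1 - b 2, b 0 + b 3⁆ = -(b 3) := by
      simp [sub_lie, lie_add, hbr]
    have h3 := h (b 1 - b 2) (Submodule.subset_span (by simp)) (b 0 + b 3)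
      (Submodule.subset_span (by simp))
    rw [hbrk] at h3
    rw [SetLike.mem_coe, Submodule.mem_span_pair] at h3
    obtain ⟨m, n, hmn⟩ := h3
    have h0 := congrArg (fun v => b.repr v 0) hmn
    have h3' := congrArg (fun v => b.repr v 3) hmn
    simp [map_add, map_sub, map_smul, map_neg, Module.Basis.repr_self, Finsupp.smul_apply,
      Finsupp.add_apply, Finsupp.sub_apply, Finsupp.neg_apply, Finsupp.single_apply,
      smul_eq_mul] at h0 h3'
    rw [h0] at h3'
    norm_num at h3'
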